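/- Split conformal prediction coverage guarantee: under exchangeability of calibration and test pairs, the conformal prediction interval Γ^α(x^{(n+1)}) = [f(x^{(n+1)}) - ε̂, f(x^{(n+1)}) + ε̂], with ε̂ the ⌈(m+1)(1-α)⌉-th smallest calibration residual |y^{(i)} - f(x^{(i)})|, satisfies P(y^{(n+1)} ∈ Γ^α(x^{(n+1)})) ≥ 1 - α. -/

import Mathlib

open MeasureTheory

/-- The `k`-th smallest element of a list of reals (1-indexed). -/
noncomputable def kthSmallest (l : List ℝ) (k : ℕ) : ℝ :=
  (l.mergeSort (fun a b => a ≤ b)).getD (k - 1) 0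

open scoped ENNReal

lemma kthSmallest_perm {l l' : List ℝ} (h : l.Perm l') (k : ℕ) :
    kthSmallest l k = kthSmallest l' k := by
  unfold kthSmallest
  congr 1
  apply List.Perm.eq_of_pairwise' (r := @LE.le ℝ _) ?_ ?_
    (((List.mergeSort_perm l _).trans h).trans (List.mergeSort_perm l' _).symm)
  · exact List.pairwise_mergeSort' _ _
  · exact List.pairwise_mergeSort' _ _

lemma countP_ofFn {n : ℕ} (v : Fin n → ℝ) (p : ℝ → Bool) :
    (List.ofFn v).countP p = (Finset.univ.filter (fun i => p (v i))).card := by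
  induction n with
  | zero => simp
  | succ n ih =>
    rw [List.ofFn_succ, List.countP_cons, ih, Finset.card_filter, Finset.card_filter,
      Fin.sum_univ_succ]
    rw [add_comm]

lemma card_filter_val_lt (n c : ℕ) (h : c ≤ n) :
    (Finset.univ.filter fun i : Fin n => i.val < c).card = c := by
  have : (Finset.univ.filter fun i : Fin n => i.val < c)
      = Finset.map (Fin.castLEEmb h) Finset.univ := by
    ext i
    simp only [Finset.mem_filter, Finset.mem_univ, true_and, Finset.mem_map]
    constructor
    · intro hi; exact ⟨⟨i.val, hi⟩, by simp [Fin.castLEEmb, Fin.ext_iff]⟩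
    · rintro ⟨j, rfl⟩; simpa [Fin.castLEEmb] using j.isLt
  rw [this, Finset.card_map, Finset.card_univ, Fintype.card_fin]

lemma countP_le_eq_card {s : List ℝ} (t : ℝ) :
    s.countP (fun a => a ≤ t) = (Finset.univ.filter fun i : Fin s.length => s.get i ≤ t).card := by
  conv_lhs => rw [← List.ofFn_get s]
  rw [countP_ofFn]
  simp

lemma sorted_getD_le_iff {s : List ℝ} (hs : s.Pairwise (· ≤ ·)) {k : ℕ} (hk1 : 1 ≤ k)
    (hkl : k ≤ s.length) (t : ℝ) :
    s.getD (k-1) 0 ≤ t ↔ k ≤ s.countP (fun a => a ≤ t) := by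
  have hlt : k - 1 < s.length := lt_of_lt_of_le (Nat.sub_lt hk1 one_pos) hkl
  rw [List.getD_eq_getElem s 0 hlt, countP_le_eq_card]
  constructor
  · intro h
    calc k = (Finset.univ.filter fun i : Fin s.length => i.val < k).card :=
          (card_filter_val_lt _ _ hkl).symm
      _ ≤ _ := by
          apply Finset.card_le_card
          intro i hi
          simp only [Finset.mem_filter, Finset.mem_univ, true_and] at hi ⊢
          have : s.get i ≤ s.get ⟨k-1, hlt⟩ := hs.rel_get_of_le (by
            simp [Fin.le_def]; omega)
          exact le_trans this h
  · intro h
    by_contra hc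
    push_neg at hc
    have hsub : (Finset.univ.filter fun i : Fin s.length => s.get i ≤ t)
        ⊆ (Finset.univ.filter fun i : Fin s.length => i.val < k - 1) := by
      intro i hi
      simp only [Finset.mem_filter, Finset.mem_univ, true_and] at hi ⊢
      by_contra hik
      push_neg at hik
      have : s.get ⟨k-1, hlt⟩ ≤ s.get i := hs.rel_get_of_le (by simp [Fin.le_def]; omega)
      exact absurd (le_trans this hi) (not_le.mpr hc)
    have := Finset.card_le_card hsub
    rw [card_filter_val_lt _ _ (by omega)] at this
    omega

lemma kthSmallest_le_iff {l : List ℝ} {k : ℕ} (hk1 : 1 ≤ k) (hkl : k ≤ l.length) (t : ℝ) :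
    kthSmallest l k ≤ t ↔ k ≤ l.countP (fun a => a ≤ t) := by
  unfold kthSmallest
  rw [sorted_getD_le_iff (List.pairwise_mergeSort' (· ≤ ·) l) hk1
    (by rwa [List.length_mergeSort])]
  rw [(List.mergeSort_perm l _).countP_eq]

lemma kthSmallest_anti_subperm {l l' : List ℝ} {k : ℕ} (hk1 : 1 ≤ k) (hkl : k ≤ l'.length)
    (h : l'.Subperm l) : kthSmallest l k ≤ kthSmallest l' k := by
  rw [kthSmallest_le_iff hk1 (le_trans hkl h.length_le)]
  calc k ≤ l'.countP (fun a => a ≤ kthSmallest l' k) :=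
        (kthSmallest_le_iff hk1 hkl _).mp le_rfl
    _ ≤ _ := h.countP_le _

lemma finRange_map_succAbove_subperm {m : ℕ} (i : Fin (m+1)) :
    ((List.finRange m).map i.succAbove).Subperm (List.finRange (m+1)) := by
  apply List.Nodup.subperm
  · exact (List.nodup_finRange m).map (Fin.succAbove_right_injective)
  · intro a _; exact List.mem_finRange a

lemma ofFn_comp_subperm {m : ℕ} (i : Fin (m+1)) (g : Fin (m+1) → ℝ) :
    (List.ofFn fun j : Fin m => g (i.succAbove j)).Subperm (List.ofFn g) := by
  rw [List.ofFn_eq_map, List.ofFn_eq_map]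
  obtain ⟨l, hlp, hls⟩ := finRange_map_succAbove_subperm i
  refine ⟨l.map g, ?_, hls.map g⟩
  have := hlp.map g
  rwa [List.map_map] at this

lemma ofFn_comp_perm {m n : ℕ} (e₁ e₂ : Fin m → Fin n) (h₁ : Function.Injective e₁)
    (h₂ : Function.Injective e₂) (hr : Set.range e₁ = Set.range e₂) (g : Fin n → ℝ) :
    (List.ofFn fun j => g (e₁ j)).Perm (List.ofFn fun j => g (e₂ j)) := by
  rw [List.ofFn_eq_map, List.ofFn_eq_map]
  have hp : ((List.finRange m).map e₁).Perm ((List.finRange m).map e₂) := by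
    rw [List.perm_ext_iff_of_nodup ((List.nodup_finRange m).map h₁)
      ((List.nodup_finRange m).map h₂)]
    intro a
    simp only [List.mem_map, List.mem_finRange, true_and]
    constructor
    · rintro ⟨j, rfl⟩
      have : e₁ j ∈ Set.range e₂ := hr ▸ Set.mem_range_self j
      obtain ⟨j', hj'⟩ := this
      exact ⟨j', hj'⟩
    · rintro ⟨j, rfl⟩
      have : e₂ j ∈ Set.range e₁ := hr ▸ Set.mem_range_self j
      obtain ⟨j', hj'⟩ := this
      exact ⟨j', hj'⟩
  have := hp.map g
  rwa [List.map_map, List.map_map] at this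

lemma card_kth_le {m k : ℕ} (hk1 : 1 ≤ k) (hk : k ≤ m) (r : Fin (m+1) → ℝ) :
    k ≤ (Finset.univ.filter fun i : Fin (m+1) =>
      r i ≤ kthSmallest (List.ofFn fun j : Fin m => r (i.succAbove j)) k).card := by
  set Q := kthSmallest (List.ofFn r) k with hQ
  have hsub : (Finset.univ.filter fun i : Fin (m+1) => r i ≤ Q)
      ⊆ (Finset.univ.filter fun i : Fin (m+1) =>
        r i ≤ kthSmallest (List.ofFn fun j : Fin m => r (i.succAbove j)) k) := by
    intro i hi
    simp only [Finset.mem_filter, Finset.mem_univ, true_and] at hi ⊢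
    refine le_trans hi ?_
    exact kthSmallest_anti_subperm hk1 (by simp [hk]) (ofFn_comp_subperm i r)
  refine le_trans ?_ (Finset.card_le_card hsub)
  have := (kthSmallest_le_iff (l := List.ofFn r) hk1 (by simp; omega) Q).mp le_rfl
  rw [countP_ofFn] at this
  simpa using this

lemma measurable_kthSmallest_ofFn {δ : Type*} [MeasurableSpace δ] {m k : ℕ}
    (hk1 : 1 ≤ k) (hk : k ≤ m) (w : δ → Fin m → ℝ) (hw : ∀ j, Measurable fun d => w d j) :
    Measurable fun d => kthSmallest (List.ofFn (w d)) k := by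
  apply measurable_of_Iic
  intro t
  have hset : (fun d => kthSmallest (List.ofFn (w d)) k) ⁻¹' Set.Iic t
      = ⋃ (S : Finset (Fin m)) (_ : S.card = k), ⋂ j ∈ S, {d | w d j ≤ t} := by
    ext d
    simp only [Set.mem_preimage, Set.mem_Iic, Set.mem_iUnion, Set.mem_iInter, Set.mem_setOf_eq]
    rw [kthSmallest_le_iff hk1 (by simpa using hk), countP_ofFn]
    constructor
    · intro h
      simp only [decide_eq_true_eq] at h
      obtain ⟨S, hS, hcard⟩ := Finset.exists_subset_card_eq h
      exact ⟨S, hcard, fun j hj => by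
        have := hS hj; simp only [Finset.mem_filter] at this; exact this.2⟩
    · rintro ⟨S, hcard, hall⟩
      simp only [decide_eq_true_eq]
      calc k = S.card := hcard.symm
        _ ≤ _ := Finset.card_le_card fun j hj => by
            simp only [Finset.mem_filter, Finset.mem_univ, true_and]; exact hall j hj
  rw [hset]
  exact MeasurableSet.iUnion fun S => MeasurableSet.iUnion fun _ =>
    MeasurableSet.biInter S.countable_toSet fun j _ =>
      measurableSet_le (hw j) measurable_const

/-- Split conformal prediction coverage guarantee: under exchangeability of
the calibration and test pairs, the interval
`Γ^α(x) = [f(x) - ε̂, f(x) + ε̂]`, with `ε̂` the `⌈(m+1)(1-α)⌉`-th smallest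
calibration residual `|y⁽ⁱ⁾ - f(x⁽ⁱ⁾)|`, covers the test response with
probability at least `1 - α`. -/
theorem split_conformal_coverage
    {Ω : Type*} [MeasurableSpace Ω] (P : Measure Ω) [IsProbabilityMeasure P]
    (L m : ℕ) (α : ℝ) (hα : α ∈ Set.Ioo (0:ℝ) 1)
    (f : (Fin L → ℝ) → ℝ) (hf : Measurable f)
    (data : Fin (m + 1) → Ω → (Fin L → ℝ) × ℝ)
    (hmeas : ∀ i, Measurable (data i))
    (hexch : ∀ π : Equiv.Perm (Fin (m + 1)),
      Measure.map (fun ω => fun i => data (π i) ω) P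
        = Measure.map (fun ω => fun i => data i ω) P)
    (hk : ⌈((m : ℝ) + 1) * (1 - α)⌉₊ ≤ m) :
    ENNReal.ofReal (1 - α) ≤
      P {ω |
        let εhat := kthSmallest
          (List.ofFn fun i : Fin m =>
            |(data i.castSucc ω).2 - f (data i.castSucc ω).1|)
          ⌈((m : ℝ) + 1) * (1 - α)⌉₊
        f (data (Fin.last m) ω).1 - εhat ≤ (data (Fin.last m) ω).2 ∧
          (data (Fin.last m) ω).2 ≤ f (data (Fin.last m) ω).1 + εhat} := by
  obtain ⟨hα0, hα1⟩ := hα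
  set k : ℕ := ⌈((m : ℝ) + 1) * (1 - α)⌉₊ with hkdef
  have hk1 : 1 ≤ k := Nat.ceil_pos.mpr (by nlinarith)
  set R : (Fin (m+1) → (Fin L → ℝ) × ℝ) → Fin (m+1) → ℝ := fun d i => |(d i).2 - f (d i).1| with hR
  have hRmeas : ∀ i, Measurable fun d => R d i := fun i =>
    ((measurable_pi_apply i).snd.sub (hf.comp (measurable_pi_apply i).fst)).abs
  set E : Fin (m+1) → Set (Fin (m+1) → (Fin L → ℝ) × ℝ) := fun i =>
    {d | R d i ≤ kthSmallest (List.ofFn fun j : Fin m => R d (i.succAbove j)) k} with hE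
  have hEmeas : ∀ i, MeasurableSet (E i) := fun i =>
    measurableSet_le (hRmeas i)
      (measurable_kthSmallest_ofFn hk1 hk (fun d j => R d (i.succAbove j))
        (fun j => hRmeas _))
  set D : Ω → (Fin (m+1) → (Fin L → ℝ) × ℝ) := fun ω i => data i ω with hD
  have hDmeas : Measurable D := measurable_pi_lambda _ fun i => hmeas i
  -- transport: all marginal events have the same probability
  have htrans : ∀ i, P (D ⁻¹' E i) = P (D ⁻¹' E (Fin.last m)) := by
    intro i
    set π : Equiv.Perm (Fin (m+1)) := Equiv.swap (Fin.last m) i with hπ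
    have hπlast : π (Fin.last m) = i := Equiv.swap_apply_left _ _
    set T : (Fin (m+1) → (Fin L → ℝ) × ℝ) → (Fin (m+1) → (Fin L → ℝ) × ℝ) := fun d j => d (π j) with hT
    have hTmeas : Measurable T := measurable_pi_lambda _ fun j => measurable_pi_apply _
    have hkey : T ⁻¹' (E (Fin.last m)) = E i := by
      ext d
      simp only [hE, Set.mem_preimage, Set.mem_setOf_eq, hT]
      show R d (π (Fin.last m)) ≤
          kthSmallest (List.ofFn fun j : Fin m => R d (π ((Fin.last m).succAbove j))) k ↔ _
      rw [hπlast]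
      have h2 : (List.ofFn fun j : Fin m => R d (π ((Fin.last m).succAbove j))).Perm
          (List.ofFn fun j : Fin m => R d (i.succAbove j)) := by
        apply ofFn_comp_perm (fun j => π ((Fin.last m).succAbove j)) i.succAbove
          (π.injective.comp (Fin.succAbove_right_injective))
          (Fin.succAbove_right_injective)
        · rw [Fin.range_succAbove]
          ext a
          simp only [Set.mem_range, Set.mem_compl_iff, Set.mem_singleton_iff]
          constructor
          · rintro ⟨j, rfl⟩ h
            exact (Fin.succAbove_ne (Fin.last m) j) (π.injective (h.trans hπlast.symm))
          · intro ha
            have hb : π.symm a ≠ Fin.last m := fun h => ha (by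
              rw [← hπlast, ← h, Equiv.apply_symm_apply])
            obtain ⟨j, hj⟩ := Fin.exists_succAbove_eq (Ne.symm hb).symm
            exact ⟨j, by rw [hj, Equiv.apply_symm_apply]⟩
      rw [kthSmallest_perm h2]
    have hmap := hexch π
    have e1 : P (D ⁻¹' E i) = P ((fun ω => fun j => data (π j) ω) ⁻¹' E (Fin.last m)) := by
      rw [← hkey]; rfl
    rw [e1, ← Measure.map_apply (by
        have : (fun ω => fun j => data (π j) ω) = T ∘ D := rfl
        rw [this]; exact hTmeas.comp hDmeas) (hEmeas (Fin.last m)),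
      hmap, Measure.map_apply hDmeas (hEmeas (Fin.last m))]
  -- pointwise counting bound
  have hpoint : ∀ ω, (k : ℝ≥0∞) ≤ ∑ i : Fin (m+1), (D ⁻¹' E i).indicator (fun _ => 1) ω := by
    intro ω
    have hcard := card_kth_le hk1 hk (R (D ω))
    set F := Finset.univ.filter fun i : Fin (m+1) =>
      R (D ω) i ≤ kthSmallest (List.ofFn fun j : Fin m => R (D ω) (i.succAbove j)) k with hF
    calc (k : ℝ≥0∞) ≤ (F.card : ℝ≥0∞) := by exact_mod_cast hcard
      _ = ∑ i ∈ F, (D ⁻¹' E i).indicator (fun _ => (1:ℝ≥0∞)) ω := by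
          rw [Finset.sum_congr rfl (fun i hi => ?_), Finset.sum_const, nsmul_eq_mul, mul_one]
          have : ω ∈ D ⁻¹' E i := by
            simp only [hF, Finset.mem_filter] at hi
            exact hi.2
          rw [Set.indicator_of_mem this]
      _ ≤ _ := Finset.sum_le_sum_of_subset (Finset.subset_univ F)
  -- integrate
  have hsum : (k : ℝ≥0∞) ≤ ∑ i : Fin (m+1), P (D ⁻¹' E i) := by
    have h1 : (k : ℝ≥0∞) = ∫⁻ _, (k : ℝ≥0∞) ∂P := by
      rw [lintegral_const, measure_univ, mul_one]
    rw [h1]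
    calc ∫⁻ _, (k : ℝ≥0∞) ∂P
        ≤ ∫⁻ ω, ∑ i : Fin (m+1), (D ⁻¹' E i).indicator (fun _ => 1) ω ∂P :=
          lintegral_mono hpoint
      _ = ∑ i : Fin (m+1), ∫⁻ ω, (D ⁻¹' E i).indicator (fun _ => 1) ω ∂P :=
          lintegral_finset_sum _ fun i _ =>
            (measurable_const.indicator (hDmeas (hEmeas i)))
      _ = ∑ i : Fin (m+1), P (D ⁻¹' E i) := by
          refine Finset.sum_congr rfl fun i _ => ?_
          exact lintegral_indicator_one (hDmeas (hEmeas i))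
  have hsum2 : (k : ℝ≥0∞) ≤ (m + 1) * P (D ⁻¹' E (Fin.last m)) := by
    calc (k : ℝ≥0∞) ≤ ∑ i : Fin (m+1), P (D ⁻¹' E i) := hsum
      _ = ∑ _i : Fin (m+1), P (D ⁻¹' E (Fin.last m)) :=
          Finset.sum_congr rfl fun i _ => htrans i
      _ = (m + 1) * P (D ⁻¹' E (Fin.last m)) := by
          rw [Finset.sum_const, Finset.card_univ, Fintype.card_fin, nsmul_eq_mul]
          norm_num
  -- final bound
  have hfinal : ENNReal.ofReal (1 - α) ≤ P (D ⁻¹' E (Fin.last m)) := by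
    rw [← ENNReal.mul_le_mul_iff_left (c := ((m:ℝ≥0∞) + 1)) (by simp) (by finiteness)]
    calc ENNReal.ofReal (1 - α) * ((m:ℝ≥0∞) + 1)
        = ENNReal.ofReal ((1 - α) * ((m:ℝ) + 1)) := by
          rw [ENNReal.ofReal_mul (by linarith)]
          congr 1
          rw [ENNReal.ofReal_add (by positivity) zero_le_one]
          simp [ENNReal.ofReal_natCast]
      _ ≤ (k : ℝ≥0∞) := by
          rw [← ENNReal.ofReal_natCast k]
          apply ENNReal.ofReal_le_ofReal
          rw [mul_comm]
          exact Nat.le_ceil _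
      _ ≤ (m + 1) * P (D ⁻¹' E (Fin.last m)) := hsum2
      _ = P (D ⁻¹' E (Fin.last m)) * ((m:ℝ≥0∞) + 1) := by ring
  -- identify the event
  refine le_trans hfinal (le_of_eq ?_)
  congr 1
  ext ω
  simp only [Set.mem_preimage, hE, Set.mem_setOf_eq]
  have h3 : ∀ j : Fin m, (Fin.last m).succAbove j = j.castSucc := fun j =>
    Fin.succAbove_last_apply j
  constructor
  · intro h
    have h' : |(data (Fin.last m) ω).2 - f (data (Fin.last m) ω).1| ≤
        kthSmallest (List.ofFn fun i : Fin m =>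
          |(data i.castSucc ω).2 - f (data i.castSucc ω).1|) k := by
      convert h using 3
      funext j
      rw [h3 j]
    rw [abs_le] at h'
    constructor <;> [linarith [h'.1]; linarith [h'.2]]
  · intro h
    have h' : |(data (Fin.last m) ω).2 - f (data (Fin.last m) ω).1| ≤
        kthSmallest (List.ofFn fun i : Fin m =>
          |(data i.castSucc ω).2 - f (data i.castSucc ω).1|) k := by
      rw [abs_le]
      exact ⟨by linarith [h.1], by linarith [h.2]⟩
    convert h' using 3
    funext j
    rw [h3 j]
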